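/- Let H be a complex Hilbert space, A : H →L[ℂ] H a bounded continuous linear operator, and let U(t) = exp((−i t) • A) (the operator exponential). If ψ₀ ∈ H satisfies ⟪ψ₀, U(t) ψ₀⟫ = 0 for all t < 0, then ψ₀ = 0. In other words, a quantum system with a bounded Hamiltonian admits no state perfectly distinguishable from all of its past states. -/

import Mathlib

open scoped InnerProductSpace
open Complex

/-- For a bounded Hamiltonian `A` with evolution `U t = exp ((−i t) • A)`,
no state is perfectly distinguishable from all of its past states: if
`⟪ψ₀, U t ψ₀⟫ = 0` for all `t < 0`, then `ψ₀ = 0`. -/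
theorem eq_zero_of_bounded_hamiltonian_vanishing_past
    {H : Type*} [NormedAddCommGroup H] [InnerProductSpace ℂ H] [CompleteSpace H]
    (A : H →L[ℂ] H) (ψ₀ : H)
    (hpast : ∀ t : ℝ, t < 0 →
      ⟪ψ₀, NormedSpace.exp ((-(I * (t : ℂ))) • A) ψ₀⟫_ℂ = 0) :
    ψ₀ = 0 := by
  -- the entire function g z = ⟪ψ₀, exp (z • A) ψ₀⟫
  set g : ℂ → ℂ := fun z => ⟪ψ₀, NormedSpace.exp (z • A) ψ₀⟫_ℂ with hg
  have hdiff : Differentiable ℂ g := by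
    intro z
    have h1 : DifferentiableAt ℂ (fun z : ℂ => NormedSpace.exp (z • A)) z :=
      (hasDerivAt_exp_smul_const A z).differentiableAt
    exact ((innerSL ℂ ψ₀).differentiableAt).comp z
      ((h1.clm_apply (differentiableAt_const ψ₀)))
  have hanal : AnalyticOnNhd ℂ g Set.univ := analyticOnNhd_univ_iff_differentiable.mpr hdiff
  -- g vanishes frequently near z₀ = I
  have hzero : ∀ s : ℝ, 0 < s → g (I * s) = 0 := by
    intro s hs
    have := hpast (-s) (by linarith)
    simpa [hg, mul_comm] using this
  have hfreq : ∃ᶠ z in nhdsWithin I {(I : ℂ)}ᶜ, g z = 0 := by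
    have htend : Filter.Tendsto (fun n : ℕ => I * (1 + 1 / (n + 1) : ℝ))
        Filter.atTop (nhdsWithin I {(I : ℂ)}ᶜ) := by
      rw [tendsto_nhdsWithin_iff]
      constructor
      · have : Filter.Tendsto (fun n : ℕ => (1 + 1 / (n + 1) : ℝ)) Filter.atTop (nhds 1) := by
          simpa using (tendsto_const_nhds : Filter.Tendsto (fun _ : ℕ => (1:ℝ)) Filter.atTop (nhds 1)).add tendsto_one_div_add_atTop_nhds_zero_nat
        have := ((continuous_ofReal.tendsto _).comp this).const_mul I
        simpa using this
      · filter_upwards with n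
        simp only [Set.mem_compl_iff, Set.mem_singleton_iff]
        intro h
        have h2 : ((1 + 1 / (n + 1) : ℝ) : ℂ) = 1 := by
          have := mul_left_cancel₀ I_ne_zero (h.trans (mul_one I).symm)
          exact this
        have h3 : (1 + 1 / (n + 1) : ℝ) = 1 := by exact_mod_cast h2
        have : (0:ℝ) < 1 / (n + 1) := by positivity
        linarith
    exact htend.frequently (Filter.Frequently.of_forall fun n =>
      hzero (1 + 1 / ((n:ℝ) + 1)) (by positivity))
  have hEq : Set.EqOn g 0 Set.univ :=
    hanal.eqOn_zero_of_preconnected_of_frequently_eq_zero isPreconnected_univ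
      (Set.mem_univ I) hfreq
  have h0 : g 0 = 0 := hEq (Set.mem_univ 0)
  have : ⟪ψ₀, ψ₀⟫_ℂ = 0 := by
    simpa [hg, NormedSpace.exp_zero] using h0
  exact inner_self_eq_zero.mp this
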